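/- For a rooted symmetric tree with daughter degree sequence (k_1,...,k_{q-1}), all k_i ≥ 1, and for any sequence (x_1,...,x_{r-1}) with 0 ≤ x_i ≤ k_i - 1 and r odd with 3 ≤ r ≤ q, the value x_2 h_3 + x_3 h_4 + ... + x_{r-1} h_r + (r-1)/2 is at most h_2, where h_i = 1 + k_i h_{i+1} and h_q = 1. -/
import Mathlib


/-- The `i`-th level vertex size of a rooted symmetric tree with `q` levels and
daughter degree sequence `k 1, …, k (q-1)`:
`h i = 1 + ∑_{j=i}^{q-1} k i * k (i+1) * ⋯ * k j`, so `h q = 1`. -/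
def hlvl (q : ℕ) (k : ℕ → ℕ) (i : ℕ) : ℕ :=
  1 + ∑ j ∈ Finset.Icc i (q - 1), ∏ t ∈ Finset.Icc i j, k t

lemma hlvl_rec (q : ℕ) (k : ℕ → ℕ) (i : ℕ) (hi : i + 1 ≤ q) :
    hlvl q k i = 1 + k i * hlvl q k (i + 1) := by
  have hiq : i ≤ q - 1 := by omega
  unfold hlvl
  rw [← Finset.Ioc_insert_left hiq, Finset.sum_insert (by simp)]
  rw [Finset.Icc_self, Finset.prod_singleton, ← Finset.Icc_add_one_left_eq_Ioc]
  have : ∀ j ∈ Finset.Icc (i+1) (q-1), ∏ t ∈ Finset.Icc i j, k t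
      = k i * ∏ t ∈ Finset.Icc (i+1) j, k t := by
    intro j hj
    simp only [Finset.mem_Icc] at hj
    rw [← Finset.Ioc_insert_left (by omega : i ≤ j), Finset.prod_insert (by simp),
      ← Finset.Icc_add_one_left_eq_Ioc]
  rw [Finset.sum_congr rfl this, ← Finset.mul_sum]
  ring

lemma telescope (q : ℕ) (k : ℕ → ℕ) (hk : ∀ i, 1 ≤ k i) :
    ∀ r, 2 ≤ r → r ≤ q →
      ∑ i ∈ Finset.Icc 2 (r - 1), (k i - 1) * hlvl q k (i + 1) + (r - 2) + hlvl q k r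
        = hlvl q k 2 := by
  intro r hr2
  induction r, hr2 using Nat.le_induction with
  | base => intro _; simp
  | succ r hr ih =>
    intro hq
    have hrq : r ≤ q := by omega
    have e1 : r + 1 - 1 = (r - 1) + 1 := by omega
    rw [e1, Finset.sum_Icc_succ_top (by omega), show r - 1 + 1 = r from by omega]
    have hrec := hlvl_rec q k r (by omega)
    have hk1 := hk r
    have : (k r - 1) * hlvl q k (r + 1) + hlvl q k (r + 1) = k r * hlvl q k (r + 1) := by
      obtain ⟨m, hm⟩ : ∃ m, k r = m + 1 := ⟨k r - 1, by omega⟩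
      rw [hm]; simp [Nat.succ_mul]
    omega

/-- For odd `r` with `3 ≤ r ≤ q` and admissible `x_i ≤ k i - 1`, the value
`x_2 h_3 + x_3 h_4 + ⋯ + x_{r-1} h_r + (r-1)/2` is at most `h_2`. -/
theorem odd_tail_le_h_two (q : ℕ) (k : ℕ → ℕ) (hk : ∀ i, 1 ≤ k i)
    (r : ℕ) (hodd : Odd r) (hr : 3 ≤ r) (hrq : r ≤ q)
    (x : ℕ → ℕ) (hx : ∀ i ∈ Finset.Icc 2 (r - 1), x i ≤ k i - 1) :
    ∑ i ∈ Finset.Icc 2 (r - 1), x i * hlvl q k (i + 1) + (r - 1) / 2 ≤ hlvl q k 2 := by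
  have key := telescope q k hk r (by omega) hrq
  have hsum : ∑ i ∈ Finset.Icc 2 (r - 1), x i * hlvl q k (i + 1)
      ≤ ∑ i ∈ Finset.Icc 2 (r - 1), (k i - 1) * hlvl q k (i + 1) :=
    Finset.sum_le_sum fun i hi => Nat.mul_le_mul_right _ (hx i hi)
  have h1 : 1 ≤ hlvl q k r := Nat.le_add_right 1 _
  omega
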